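/- Let (Γ, c₀, c₁, …, c_r, t) be a decorated cactus and let 1 ≤ i ≤ r. Suppose f ∈ c_i and k ≥ 1 is an integer such that (ι ∘ N)^k(f) ∈ c_i while (ι ∘ N)^l(f) ∉ c_i for every l with 1 ≤ l ≤ k−1. Then f = (N ∘ ι)((ι ∘ N)^k(f)). (Equivalently: the first return of the trajectory f, (ι∘N)(f), (ι∘N)²(f), … to the cycle c_i is the element ι(N^{−1}(f)).) -/

import Mathlib

open scoped Classical

namespace SimpleGraph

variable {V : Type*} [Fintype V] (G : SimpleGraph V)

lemma my_connected_card_le [Fintype G.edgeSet] (hG : G.Connected) :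
    Fintype.card V ≤ G.edgeFinset.card + 1 := by
  classical
  have : Nonempty V := hG.nonempty
  inhabit V
  choose p hp using fun w (h : w ≠ default) => (hG w default).exists_walk_length_eq_dist
  have hnil : ∀ w (h : w ≠ default), ¬ (p w h).Nil := fun w h => Walk.not_nil_of_ne h
  have hdlt : ∀ (x y : V) (hx : x ≠ default),
      (p x hx).getVert 1 = y → G.dist y default < G.dist x default := by
    intro x y hx hxy
    have ht : ((p x hx).tail).length + 1 = (p x hx).length :=
      Walk.length_tail_add_one (hnil x hx)
    have h2 := G.dist_le ((p x hx).tail.copy hxy rfl)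
    rw [Walk.length_copy] at h2
    have h3 := hp x hx
    omega
  have hcard : (({default}ᶜ : Finset V)).card ≤ G.edgeFinset.card := by
    apply Finset.card_le_card_of_injOn
      (fun w => if h : w ≠ default then ((p w h).firstDart (hnil w h)).edge else s(w, w))
    · intro w hw
      have hw : w ≠ default := by simpa using hw
      dsimp only
      rw [dif_pos hw]
      exact mem_edgeFinset.2 (Dart.edge_mem _)
    · intro a ha b hb hab
      simp only [Finset.coe_compl, Set.mem_compl_iff, Finset.coe_singleton,
        Set.mem_singleton_iff] at ha hb
      simp only [dif_pos ha, dif_pos hb] at hab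
      by_contra hne
      rw [Walk.edge_firstDart, Walk.edge_firstDart, Sym2.eq_iff] at hab
      rcases hab with ⟨h1, h2⟩ | ⟨h1, h2⟩
      · exact hne h1
      · have := hdlt a b ha h2
        have := hdlt b a hb h1.symm
        omega
  have : (({default}ᶜ : Finset V)).card = Fintype.card V - 1 := by
    simp [Finset.card_compl]
  have : 1 ≤ Fintype.card V := Fintype.card_pos
  omega

end SimpleGraph

namespace SimpleGraph

variable {V : Type*} [Fintype V] {G : SimpleGraph V}

lemma my_isAcyclic [Fintype G.edgeSet] (hG : G.Connected)
    (hcard : Fintype.card V = G.edgeFinset.card + 1) : G.IsAcyclic := by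
  classical
  intro v p hp
  have hlen : 3 ≤ p.length := hp.three_le_length
  have hne : p.edges ≠ [] := by
    intro h
    have h2 := p.length_edges
    rw [h] at h2
    simp at h2
    omega
  have hmem : p.edges.head hne ∈ p.edges := List.head_mem hne
  obtain ⟨⟨x, y⟩, hrep⟩ := Quot.exists_rep (p.edges.head hne)
  rw [← hrep] at hmem
  have hmem' : s(x, y) ∈ p.edges := hmem
  have hxy : G.Adj x y ∧ (G \ fromEdgeSet {s(x, y)}).Reachable x y :=
    (adj_and_reachable_delete_edges_iff_exists_cycle).2 ⟨v, p, hp, hmem'⟩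
  set G' := G \ fromEdgeSet {s(x, y)} with hG'
  have hstep : ∀ a b : V, G.Adj a b → G'.Reachable a b := by
    intro a b hab
    by_cases h : s(a, b) = s(x, y)
    · rw [Sym2.eq_iff] at h
      rcases h with ⟨rfl, rfl⟩ | ⟨rfl, rfl⟩
      · exact hxy.2
      · exact hxy.2.symm
    · exact Adj.reachable (by
        simp only [hG', sdiff_adj, fromEdgeSet_adj, Set.mem_singleton_iff]
        exact ⟨hab, fun hcon => h hcon.1⟩)
  have hpre : G'.Connected := by
    haveI := hG.nonempty
    apply Connected.mk
    intro a b
    obtain ⟨w⟩ := hG a b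
    induction w with
    | nil => exact Reachable.refl _
    | cons h q ih => exact (hstep _ _ h).trans ih
  haveI : Fintype ↥G'.edgeSet := Fintype.ofFinite _
  have hcount := G'.my_connected_card_le hpre
  have hes : G'.edgeSet = G.edgeSet \ {s(x, y)} := by
    rw [hG', edgeSet_sdiff, edgeSet_fromEdgeSet, edgeSet_sdiff_sdiff_isDiag]
  have hsub : G'.edgeFinset = G.edgeFinset.erase s(x, y) := by
    ext e'
    simp only [mem_edgeFinset, Finset.mem_erase, hes, Set.mem_diff, Set.mem_singleton_iff]
    tauto
  have hkey : s(x, y) ∈ G.edgeFinset := mem_edgeFinset.2 (G.mem_edgeSet.2 hxy.1)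
  have hc2 : G'.edgeFinset.card = G.edgeFinset.card - 1 := by
    rw [hsub, Finset.card_erase_of_mem hkey]
  have hpos : 1 ≤ G.edgeFinset.card := Finset.card_pos.2 ⟨_, hkey⟩
  omega

end SimpleGraph


/-- A *decorated cactus* (Definition 8.1 of the paper): a connected ribbon graph `Γ`
of genus `0`, together with cycles `c 0, c 1, …, c r` (orbits of `rot ∘ inv` on the
set of flags) whose disjoint union is the set of flags, such that every pair
`{f, inv f}` meets `c 0` in exactly one flag, and a distinguished tail `tail`.

* `V` is the (finite) set of vertices, `F` the (finite) set of flags;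
* `lam : F → V` assigns to a flag its vertex, `inv` is the involution `ι`
  (whose non-fixed orbits are the edges, and whose fixed points are the tails);
* `rot : F ≃ F` is the ribbon structure `N`, preserving `lam` and acting
  transitively on every fiber of `lam`;
* connectivity is phrased via walks of edges, and genus `0` via
  `#V + #cycles = #edges + 2` (i.e. `2 - 2g = #V - #E + #cycles` with `g = 0`). -/
structure DecoratedCactus (r : ℕ) : Type 1 where
  V : Type
  F : Type
  [finV : Fintype V]
  [finF : Fintype F]
  [decV : DecidableEq V]
  [decF : DecidableEq F]
  lam : F → V
  inv : F → F
  inv_invol : ∀ f, inv (inv f) = f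
  rot : F ≃ F
  lam_rot : ∀ f, lam (rot f) = lam f
  rot_trans : ∀ f g : F, lam f = lam g → ∃ n : ℕ, (fun x => rot x)^[n] f = g
  conn : Nonempty V ∧ ∀ v w : V,
    Relation.ReflTransGen (fun a b => ∃ f, inv f ≠ f ∧ lam f = a ∧ lam (inv f) = b) v w
  genus_zero :
    Fintype.card V +
      (Finset.univ.image (fun f : F =>
        Finset.univ.filter (fun g : F => ∃ n : ℕ, (fun x => rot (inv x))^[n] f = g))).card =
    ((Finset.univ.filter (fun f : F => inv f ≠ f)).image (fun f => s(f, inv f))).card + 2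
  c : Fin (r + 1) → Set F
  c_cycle : ∀ i, ∃ f : F, c i = {g | ∃ n : ℕ, (fun x => rot (inv x))^[n] f = g}
  c_disj : ∀ i j, i ≠ j → c i ∩ c j = ∅
  c_cover : (⋃ i, c i) = (Set.univ : Set F)
  flag_c0 : ∀ f : F, ({f, inv f} ∩ c 0 : Set F).encard = 1
  tail : F
  tail_tail : inv tail = tail

attribute [instance] DecoratedCactus.finV DecoratedCactus.finF
  DecoratedCactus.decV DecoratedCactus.decF

namespace DecoratedCactus

variable {r : ℕ} (d : DecoratedCactus r)

noncomputable def sig : Equiv.Perm d.F :=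
  (Function.Involutive.toPerm d.inv d.inv_invol).trans d.rot

lemma sig_apply (x : d.F) : d.sig x = d.rot (d.inv x) := rfl

lemma exists_iter_iff_sameCycle (a b : d.F) :
    (∃ n : ℕ, (fun x => d.rot (d.inv x))^[n] a = b) ↔ d.sig.SameCycle a b := by
  have hfun : (fun x => d.rot (d.inv x)) = ⇑d.sig := rfl
  constructor
  · rintro ⟨n, hn⟩
    exact ⟨(n : ℤ), by rw [zpow_natCast]; rw [hfun, Equiv.Perm.iterate_eq_pow] at hn; exact hn⟩
  · intro h
    obtain ⟨n, _, hn⟩ := h.exists_pow_eq'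
    exact ⟨n, by rw [hfun, Equiv.Perm.iterate_eq_pow]; exact hn⟩

lemma mem_c_iff_sameCycle {i : Fin (r + 1)} {a : d.F} (ha : a ∈ d.c i) (b : d.F) :
    b ∈ d.c i ↔ d.sig.SameCycle a b := by
  obtain ⟨f₀, hf₀⟩ := d.c_cycle i
  have h : ∀ x, x ∈ d.c i ↔ d.sig.SameCycle f₀ x := by
    intro x
    rw [hf₀]
    exact (d.exists_iter_iff_sameCycle f₀ x)
  rw [h]
  constructor
  · intro hb
    exact ((h a).1 ha).symm.trans hb
  · intro hb
    exact ((h a).1 ha).trans hb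

lemma sig_mem_c {i : Fin (r + 1)} {a : d.F} (ha : a ∈ d.c i) : d.sig a ∈ d.c i :=
  (d.mem_c_iff_sameCycle ha _).2 ⟨1, by simp⟩

lemma sig_pow_mem_c {i : Fin (r + 1)} {a : d.F} (ha : a ∈ d.c i) (n : ℕ) :
    (d.sig ^ n) a ∈ d.c i :=
  (d.mem_c_iff_sameCycle ha _).2 ⟨(n : ℤ), by rw [zpow_natCast]⟩

lemma mem_c_exists (a : d.F) : ∃ i, a ∈ d.c i := by
  have := d.c_cover
  have ha : a ∈ ⋃ i, d.c i := by rw [this]; trivial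
  simpa using ha

lemma mem_c_unique {a : d.F} {i j : Fin (r + 1)} (hi : a ∈ d.c i) (hj : a ∈ d.c j) : i = j := by
  by_contra h
  have := d.c_disj i j h
  exact absurd (Set.mem_inter hi hj) (by rw [this]; exact id)

/-- tails lie in `c 0` -/
lemma tail_mem_c0 {a : d.F} (ha : d.inv a = a) : a ∈ d.c 0 := by
  have h := d.flag_c0 a
  rw [ha] at h
  have hne : ({a, a} ∩ d.c 0 : Set d.F).Nonempty := by
    rw [← Set.encard_pos, h]; norm_num
  obtain ⟨x, hx⟩ := hne
  rcases hx.1 with rfl | rfl <;> exact hx.2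

/-- a flag not in `c 0` has its partner in `c 0` -/
lemma inv_mem_c0 {a : d.F} (ha : a ∉ d.c 0) : d.inv a ∈ d.c 0 := by
  have h := d.flag_c0 a
  have hne : ({a, d.inv a} ∩ d.c 0 : Set d.F).Nonempty := by
    rw [← Set.encard_pos, h]; norm_num
  obtain ⟨x, hx⟩ := hne
  rcases hx.1 with rfl | rfl
  · exact absurd hx.2 ha
  · exact hx.2

lemma not_tail_of_inner {a : d.F} (ha : a ∉ d.c 0) : d.inv a ≠ a :=
  fun h => ha (d.tail_mem_c0 h)

/-- both flags of an edge cannot be in `c 0` -/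
lemma not_both_c0 {a : d.F} (ha : a ∈ d.c 0) (ha' : d.inv a ∈ d.c 0) : d.inv a = a := by
  by_contra hne
  have h := d.flag_c0 a
  have : ({a, d.inv a} ∩ d.c 0 : Set d.F) = {a, d.inv a} := by
    apply Set.inter_eq_left.2
    intro x hx
    rcases hx with rfl | rfl
    · exact ha
    · exact ha'
  rw [this] at h
  rw [Set.encard_pair (Ne.symm hne)] at h
  norm_num at h

lemma lam_sig (x : d.F) : d.lam (d.sig x) = d.lam (d.inv x) := d.lam_rot _

/-- the iterates of `ι ∘ N` in terms of `σ = N ∘ ι` -/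
lemma tau_iter (l : ℕ) (x : d.F) :
    (fun y => d.inv (d.rot y))^[l] x = d.inv ((d.sig ^ l) (d.inv x)) := by
  induction l with
  | zero => simp [d.inv_invol]
  | succ n ih =>
      rw [Function.iterate_succ_apply', ih, pow_succ', Equiv.Perm.mul_apply]
      rfl

end DecoratedCactus
namespace DecoratedCactus

variable {r : ℕ} (d : DecoratedCactus r)

/-- the inner flags: those not on the outer cycle `c 0` -/
noncomputable def inner : Finset d.F := Finset.univ.filter (fun g => g ∉ d.c 0)

lemma mem_inner {g : d.F} : g ∈ d.inner ↔ g ∉ d.c 0 := by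
  simp [inner]

lemma cycles_card :
    (Finset.univ.image (fun f : d.F =>
      Finset.univ.filter (fun g : d.F => ∃ n : ℕ, (fun x => d.rot (d.inv x))^[n] f = g))).card
      = r + 1 := by
  classical
  have hC : ∀ i : Fin (r + 1), ∃ f₀ : d.F, f₀ ∈ d.c i := by
    intro i
    obtain ⟨f₀, hf₀⟩ := d.c_cycle i
    exact ⟨f₀, by rw [hf₀]; exact ⟨0, rfl⟩⟩
  have himg : (Finset.univ.image (fun f : d.F =>
      Finset.univ.filter (fun g : d.F => ∃ n : ℕ, (fun x => d.rot (d.inv x))^[n] f = g)))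
      = Finset.univ.image (fun i : Fin (r + 1) => Finset.univ.filter (fun g => g ∈ d.c i)) := by
    ext e
    simp only [Finset.mem_image, Finset.mem_univ, true_and]
    constructor
    · rintro ⟨f, rfl⟩
      obtain ⟨i, hi⟩ := d.mem_c_exists f
      refine ⟨i, ?_⟩
      ext g
      simp only [Finset.mem_filter, Finset.mem_univ, true_and]
      rw [d.exists_iter_iff_sameCycle f g, ← d.mem_c_iff_sameCycle hi]
    · rintro ⟨i, rfl⟩
      obtain ⟨f₀, hf₀⟩ := hC i
      refine ⟨f₀, ?_⟩
      ext g
      simp only [Finset.mem_filter, Finset.mem_univ, true_and]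
      rw [d.exists_iter_iff_sameCycle f₀ g, ← d.mem_c_iff_sameCycle hf₀]
  rw [himg]
  rw [Finset.card_image_of_injective _ ?_, Finset.card_univ, Fintype.card_fin]
  intro i j hij
  obtain ⟨f₀, hf₀⟩ := hC i
  have : f₀ ∈ Finset.univ.filter (fun g => g ∈ d.c j) := by
    simp only at hij
    rw [← hij]
    simp [hf₀]
  exact d.mem_c_unique hf₀ (by simpa using this)

lemma edges_eq_image :
    ((Finset.univ.filter (fun f : d.F => d.inv f ≠ f)).image (fun f => s(f, d.inv f)))
      = d.inner.image (fun f => s(f, d.inv f)) := by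
  classical
  ext e
  simp only [Finset.mem_image, Finset.mem_filter, Finset.mem_univ, true_and, mem_inner]
  constructor
  · rintro ⟨f, hf, rfl⟩
    by_cases h : f ∈ d.c 0
    · have h1 : d.inv f ∉ d.c 0 := fun hc => hf (d.not_both_c0 h hc)
      exact ⟨d.inv f, h1, by rw [d.inv_invol, Sym2.eq_swap]⟩
    · exact ⟨f, h, rfl⟩
  · rintro ⟨f, hf, rfl⟩
    exact ⟨f, d.not_tail_of_inner hf, rfl⟩

lemma edges_card :
    ((Finset.univ.filter (fun f : d.F => d.inv f ≠ f)).image (fun f => s(f, d.inv f))).card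
      = d.inner.card := by
  classical
  rw [d.edges_eq_image]
  apply Finset.card_image_of_injOn
  intro a ha b hb hab
  rw [Finset.mem_coe, mem_inner] at ha hb
  rw [Sym2.eq_iff] at hab
  rcases hab with ⟨h, _⟩ | ⟨h1, h2⟩
  · exact h
  · exfalso
    exact ha (h1 ▸ d.inv_mem_c0 hb)

lemma euler : Fintype.card d.V + r = d.inner.card + 1 := by
  have h := d.genus_zero
  rw [d.cycles_card, d.edges_card] at h
  omega

end DecoratedCactus
namespace DecoratedCactus

variable {r : ℕ} (d : DecoratedCactus r)

/-- the cycle containing a flag -/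
noncomputable def face (g : d.F) : Fin (r + 1) := (d.mem_c_exists g).choose

lemma mem_face (g : d.F) : g ∈ d.c (d.face g) := (d.mem_c_exists g).choose_spec

lemma face_eq {g : d.F} {i : Fin (r + 1)} (h : g ∈ d.c i) : d.face g = i :=
  d.mem_c_unique (d.mem_face g) h

lemma face_ne_zero {g : d.F} (h : g ∉ d.c 0) : d.face g ≠ 0 :=
  fun hc => h (hc ▸ d.mem_face g)

/-- incidence of a vertex with an inner cycle -/
def Inc (v : d.V) (i : Fin r) : Prop := ∃ g, g ∈ d.c i.succ ∧ d.lam g = v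

/-- the bipartite vertex-face incidence graph -/
def B : SimpleGraph (d.V ⊕ Fin r) where
  Adj x y := match x, y with
    | Sum.inl v, Sum.inr i => d.Inc v i
    | Sum.inr i, Sum.inl v => d.Inc v i
    | _, _ => False
  symm := ⟨by rintro (v | i) (w | j) h <;> exact h⟩
  loopless := ⟨by rintro (v | i) h <;> exact h⟩

lemma B_adj_lr {v : d.V} {i : Fin r} : d.B.Adj (Sum.inl v) (Sum.inr i) ↔ d.Inc v i := Iff.rfl

lemma B_adj_rl {v : d.V} {i : Fin r} : d.B.Adj (Sum.inr i) (Sum.inl v) ↔ d.Inc v i := Iff.rfl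

/-- the inner cycle containing a flag, as an element of `Fin r` -/
noncomputable def faceIdx (hr : 0 < r) (g : d.F) : Fin r :=
  if h : d.face g ≠ 0 then (d.face g).pred h else ⟨0, hr⟩

lemma faceIdx_succ (hr : 0 < r) {g : d.F} (h : g ∉ d.c 0) : (d.faceIdx hr g).succ = d.face g := by
  rw [faceIdx, dif_pos (d.face_ne_zero h), Fin.succ_pred]

lemma faceIdx_eq (hr : 0 < r) {g : d.F} {j : Fin r} (h : g ∈ d.c j.succ) : d.faceIdx hr g = j := by
  have h0 : g ∉ d.c 0 := by
    intro hc
    exact (Fin.succ_ne_zero j) (d.mem_c_unique h hc)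
  have := d.faceIdx_succ hr h0
  rw [d.face_eq h] at this
  exact Fin.succ_injective _ this

/-- the incidence-graph edge associated with an inner flag -/
noncomputable def psi (hr : 0 < r) (g : d.F) : Sym2 (d.V ⊕ Fin r) :=
  s(Sum.inl (d.lam g), Sum.inr (d.faceIdx hr g))

lemma psi_mem_edgeSet (hr : 0 < r) {g : d.F} (h : g ∉ d.c 0) : d.psi hr g ∈ d.B.edgeSet := by
  rw [psi, SimpleGraph.mem_edgeSet, B_adj_lr]
  exact ⟨g, by rw [d.faceIdx_succ hr h]; exact d.mem_face g, rfl⟩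

lemma edgeFinset_eq (hr : 0 < r) [Fintype d.B.edgeSet] :
    d.B.edgeFinset = d.inner.image (d.psi hr) := by
  classical
  ext e
  rw [SimpleGraph.mem_edgeFinset, Finset.mem_image]
  constructor
  · intro he
    induction e using Sym2.ind with
    | _ x y =>
    rw [SimpleGraph.mem_edgeSet] at he
    -- analyze the adjacency
    match x, y, he with
    | Sum.inl v, Sum.inr i, he =>
        obtain ⟨g, hg, rfl⟩ := he
        refine ⟨g, ?_, ?_⟩
        · rw [mem_inner]
          intro hc
          exact (Fin.succ_ne_zero i) (d.mem_c_unique hg hc)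
        · rw [psi, d.faceIdx_eq hr hg]
    | Sum.inr i, Sum.inl v, he =>
        obtain ⟨g, hg, rfl⟩ := he
        refine ⟨g, ?_, ?_⟩
        · rw [mem_inner]
          intro hc
          exact (Fin.succ_ne_zero i) (d.mem_c_unique hg hc)
        · rw [psi, d.faceIdx_eq hr hg, Sym2.eq_swap]
  · rintro ⟨g, hg, rfl⟩
    exact d.psi_mem_edgeSet hr (d.mem_inner.1 hg)

/-- inner flags reach their partner's vertex in the incidence graph -/
lemma reach_inv (hr : 0 < r) {g : d.F} (h : g ∉ d.c 0) :
    d.B.Reachable (Sum.inl (d.lam g)) (Sum.inl (d.lam (d.inv g))) := by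
  have e1 : d.B.Adj (Sum.inl (d.lam g)) (Sum.inr (d.faceIdx hr g)) :=
    ⟨g, by rw [d.faceIdx_succ hr h]; exact d.mem_face g, rfl⟩
  have e2 : d.B.Adj (Sum.inr (d.faceIdx hr g)) (Sum.inl (d.lam (d.inv g))) := by
    rw [B_adj_rl]
    refine ⟨d.sig g, by rw [d.faceIdx_succ hr h]; exact d.sig_mem_c (d.mem_face g), d.lam_sig g⟩
  exact (e1.reachable).trans e2.reachable

lemma B_connected (hr : 0 < r) : d.B.Connected := by
  have hC : ∀ i : Fin (r + 1), ∃ f₀ : d.F, f₀ ∈ d.c i := by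
    intro i
    obtain ⟨f₀, hf₀⟩ := d.c_cycle i
    exact ⟨f₀, by rw [hf₀]; exact ⟨0, rfl⟩⟩
  haveI : Nonempty d.V := d.conn.1
  haveI : Nonempty (d.V ⊕ Fin r) := ⟨Sum.inl (Classical.arbitrary _)⟩
  apply SimpleGraph.Connected.mk
  have hll : ∀ v w : d.V, d.B.Reachable (Sum.inl v) (Sum.inl w) := by
    intro v w
    have h := d.conn.2 v w
    induction h with
    | refl => rfl
    | tail _ hstep ih =>
        obtain ⟨g, hg1, rfl, rfl⟩ := hstep
        refine ih.trans ?_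
        by_cases hc : g ∈ d.c 0
        · have h2 : d.inv g ∉ d.c 0 := by
            intro hc2
            exact hg1 (d.not_both_c0 hc hc2)
          have := d.reach_inv hr h2
          rw [d.inv_invol] at this
          exact this.symm
        · exact d.reach_inv hr hc
  have hrl : ∀ (i : Fin r), ∃ v : d.V, d.B.Reachable (Sum.inr i) (Sum.inl v) := by
    intro i
    obtain ⟨g, hg⟩ := hC i.succ
    exact ⟨d.lam g, (SimpleGraph.Adj.reachable (by rw [B_adj_rl]; exact ⟨g, hg, rfl⟩))⟩
  rintro (v | i) (w | j)
  · exact hll v w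
  · obtain ⟨u, hu⟩ := hrl j
    exact (hll v u).trans hu.symm
  · obtain ⟨u, hu⟩ := hrl i
    exact hu.trans (hll u w)
  · obtain ⟨u, hu⟩ := hrl i
    obtain ⟨u', hu'⟩ := hrl j
    exact (hu.trans (hll u u')).trans hu'.symm

end DecoratedCactus
namespace DecoratedCactus

variable {r : ℕ} (d : DecoratedCactus r)

lemma key_facts (hr : 0 < r) [Fintype d.B.edgeSet] :
    d.B.IsAcyclic ∧ Set.InjOn (d.psi hr) ↑d.inner := by
  classical
  have hconn := d.B_connected hr
  have h1 := d.B.my_connected_card_le hconn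
  have himg := d.edgeFinset_eq hr
  have h2 : d.B.edgeFinset.card ≤ d.inner.card := by
    rw [himg]; exact Finset.card_image_le
  have h3 := d.euler
  have hcardsum : Fintype.card (d.V ⊕ Fin r) = Fintype.card d.V + r := by
    simp [Fintype.card_sum]
  have hEq : Fintype.card (d.V ⊕ Fin r) = d.B.edgeFinset.card + 1 := by omega
  refine ⟨SimpleGraph.my_isAcyclic hconn hEq, ?_⟩
  rw [← Finset.card_image_iff]
  rw [← himg]
  omega

end DecoratedCactus
/-- key claim in the proof of Lemma 8.4.  Let `f ∈ c i` (`i ≠ 0`)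
and let `k ≥ 1` be such that `(ι∘N)^k f ∈ c i` while `(ι∘N)^l f ∉ c i` for
`1 ≤ l ≤ k − 1`.  Then `f = (N∘ι)((ι∘N)^k f)`: the first return of the trajectory
of `f` under `ι∘N` to the cycle `c i` is the element `ι(N⁻¹ f)`. -/
theorem DecoratedCactus.first_return_eq {r : ℕ} (d : DecoratedCactus r)
    (i : Fin (r + 1)) (hi : i ≠ 0) (f : d.F) (hf : f ∈ d.c i)
    (k : ℕ) (hk : 1 ≤ k)
    (hret : (fun x => d.inv (d.rot x))^[k] f ∈ d.c i)
    (hfirst : ∀ l, 1 ≤ l → l ≤ k - 1 → (fun x => d.inv (d.rot x))^[l] f ∉ d.c i) :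
    f = d.rot (d.inv ((fun x => d.inv (d.rot x))^[k] f)) := by
  classical
  rcases Nat.eq_zero_or_pos r with rfl | hr
  · exact absurd (Fin.ext (by omega)) hi
  haveI : Fintype ↥d.B.edgeSet := Fintype.ofFinite _
  obtain ⟨hacyc, hinj⟩ := d.key_facts hr
  set X : ℕ → d.F := fun l => (d.sig ^ l) (d.inv f) with hX
  have hf0 : f ∉ d.c 0 := fun hc => hi (d.mem_c_unique hf hc)
  have hinvf : d.inv f ∈ d.c 0 := d.inv_mem_c0 hf0
  have hX0 : ∀ l, X l ∈ d.c 0 := fun l => d.sig_pow_mem_c hinvf l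
  have htau : ∀ l, (fun y => d.inv (d.rot y))^[l] f = d.inv (X l) := fun l => d.tau_iter l f
  have hretk : d.inv (X k) ∈ d.c i := by rw [← htau]; exact hret
  have hfirst' : ∀ l, 1 ≤ l → l < k → d.inv (X l) ∉ d.c i := by
    intro l h1 h2
    rw [← htau]
    exact hfirst l h1 (by omega)
  set iIdx : Fin r := i.pred hi with hiIdxdef
  have hiIdx : iIdx.succ = i := Fin.succ_pred _ _
  have hXsucc : ∀ n, X (n + 1) = d.rot (d.inv (X n)) := by
    intro n
    rw [hX]
    simp only [pow_succ', Equiv.Perm.mul_apply]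
    rfl
  have hwalk : ∀ l, 1 ≤ l → l ≤ k →
      ∃ w : d.B.Walk (Sum.inl (d.lam f)) (Sum.inl (d.lam (X l))),
        Sum.inr iIdx ∉ w.support := by
    intro l
    induction l with
    | zero => omega
    | succ n ih =>
      intro _ hlk
      rcases Nat.eq_zero_or_pos n with rfl | hn
      · have hx1 : X 1 = d.rot f := by
          rw [hX]
          simp only [pow_one]
          rw [sig_apply, d.inv_invol]
        have hl1 : Sum.inl (d.lam f) = (Sum.inl (d.lam (X 1)) : d.V ⊕ Fin r) := by
          rw [hx1, d.lam_rot]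
        exact ⟨SimpleGraph.Walk.nil.copy rfl hl1, by simp⟩
      · obtain ⟨w, hw⟩ := ih hn (by omega)
        by_cases ht : d.inv (X n) = X n
        · have hlam : Sum.inl (d.lam (X n)) = (Sum.inl (d.lam (X (n + 1))) : d.V ⊕ Fin r) := by
            rw [hXsucc n, ht, d.lam_rot]
          exact ⟨w.copy rfl hlam, by rwa [SimpleGraph.Walk.support_copy]⟩
        · set g : d.F := d.inv (X n) with hgdef
          have hg : g ∉ d.c 0 := fun hc => ht (d.not_both_c0 (hX0 n) hc)
          set j : Fin r := d.faceIdx hr g with hjdef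
          have hji : j ≠ iIdx := by
            intro hc
            apply hfirst' n hn (by omega)
            have : (d.faceIdx hr g).succ = d.face g := d.faceIdx_succ hr hg
            rw [← hjdef, hc, hiIdx] at this
            show g ∈ d.c i
            rw [this]
            exact d.mem_face g
          have e1 : d.B.Adj (Sum.inl (d.lam (X n))) (Sum.inr j) := by
            rw [B_adj_lr]
            refine ⟨d.sig g, ?_, ?_⟩
            · rw [hjdef, d.faceIdx_succ hr hg]
              exact d.sig_mem_c (d.mem_face g)
            · rw [d.lam_sig, hgdef, d.inv_invol]
          have e2 : d.B.Adj (Sum.inr j) (Sum.inl (d.lam g)) := by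
            rw [B_adj_rl]
            refine ⟨g, ?_, rfl⟩
            rw [hjdef, d.faceIdx_succ hr hg]
            exact d.mem_face g
          have hlam : Sum.inl (d.lam g) = (Sum.inl (d.lam (X (n + 1))) : d.V ⊕ Fin r) := by
            rw [hXsucc n, d.lam_rot]
          refine ⟨(w.append ((SimpleGraph.Walk.cons e1
            (SimpleGraph.Walk.cons e2 SimpleGraph.Walk.nil)).copy rfl hlam)), ?_⟩
          rw [SimpleGraph.Walk.mem_support_append_iff]
          rintro (hmem | hmem)
          · exact hw hmem
          · rw [SimpleGraph.Walk.support_copy] at hmem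
            simp only [SimpleGraph.Walk.support_cons, SimpleGraph.Walk.support_nil,
              List.mem_cons, List.not_mem_nil, or_false] at hmem
            rcases hmem with h | h | h
            · exact (Sum.inr_ne_inl h).elim
            · exact hji (Sum.inr_injective h).symm
            · exact (Sum.inr_ne_inl h).elim
  obtain ⟨w, hw⟩ := hwalk k hk le_rfl
  have eA : d.B.Adj (Sum.inl (d.lam f)) (Sum.inr iIdx) := by
    rw [B_adj_lr]
    exact ⟨f, by rw [hiIdx]; exact hf, rfl⟩
  have eB : d.B.Adj (Sum.inr iIdx) (Sum.inl (d.lam (X k))) := by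
    rw [B_adj_rl]
    refine ⟨d.sig (d.inv (X k)), by rw [hiIdx]; exact d.sig_mem_c hretk, ?_⟩
    rw [d.lam_sig, d.inv_invol]
  have hlamk : d.lam (X k) = d.lam f := by
    by_contra hne
    have hQ : (SimpleGraph.Walk.cons eA (SimpleGraph.Walk.cons eB
        SimpleGraph.Walk.nil)).IsPath := by
      rw [SimpleGraph.Walk.isPath_def]
      simp only [SimpleGraph.Walk.support_cons, SimpleGraph.Walk.support_nil]
      refine List.nodup_cons.2 ⟨?_, List.nodup_cons.2 ⟨?_, List.nodup_singleton _⟩⟩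
      · simp only [List.mem_cons, List.not_mem_nil, or_false]
        rintro (h | h)
        · exact Sum.inl_ne_inr h
        · exact hne (Sum.inl_injective h).symm
      · simp only [List.mem_cons, List.not_mem_nil, or_false]
        intro h
        exact Sum.inr_ne_inl h
    have hPQ := hacyc.path_unique w.toPath ⟨_, hQ⟩
    have hmem : Sum.inr iIdx ∈ (w.toPath.1).support := by
      rw [hPQ]
      simp
    exact hw (SimpleGraph.Walk.support_toPath_subset w hmem)
  have hg2 : d.sig (d.inv (X k)) ∈ d.c i := d.sig_mem_c hretk
  have hfmem : f ∈ (d.inner : Set d.F) := by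
    rw [Finset.mem_coe, mem_inner]; exact hf0
  have hg2mem : d.sig (d.inv (X k)) ∈ (d.inner : Set d.F) := by
    rw [Finset.mem_coe, mem_inner]
    intro hc
    exact hi (d.mem_c_unique hg2 hc)
  have hpsi : d.psi hr f = d.psi hr (d.sig (d.inv (X k))) := by
    rw [psi, psi]
    have hface1 : d.faceIdx hr f = iIdx := d.faceIdx_eq hr (by rw [hiIdx]; exact hf)
    have hface2 : d.faceIdx hr (d.sig (d.inv (X k))) = iIdx :=
      d.faceIdx_eq hr (by rw [hiIdx]; exact hg2)
    rw [hface1, hface2, d.lam_sig, d.inv_invol, hlamk]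
  have hfeq : f = d.sig (d.inv (X k)) := hinj hfmem hg2mem hpsi
  rw [htau k]
  exact hfeq
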